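/- Let H = (1/m) Σ_{i=1}^m (I − P̃_i) be a uniform stoquastic k-local Hamiltonian with degree bound d and m ≥ n, which is ε-frustrated for some ε ∈ (0,1]. Let S₀ ⊆ Σ^n be a nonempty set containing no bad strings for H. Then there exist an integer ℓ with ℓ ≥ εm/(2kd) ≥ εn/(2kd) and indices i_1, …, i_ℓ ∈ {1,…,m} whose qudit sets Q_{i_1}, …, Q_{i_ℓ} are pairwise disjoint, such that the sequence (P̃_{i_1}, …, P̃_{i_ℓ}) is sequentially (ε/2)-frustrated by |S₀⟩: setting u_0 = |S₀⟩ and u_t = P̃_{i_t} ⋯ P̃_{i_1} |S₀⟩, for every t ∈ {1,…,ℓ} the vector u_{t−1} is nonzero and ‖P̃_{i_t} · û_{t−1}‖² ≤ 1 − ε/2, where û denotes the subset state of supp(u). -/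

import Mathlib

open Matrix

/-- A uniform stoquastic `k`-local term on strings in `Σ^n`: a set `Q` of at most `k` qudits
together with a finite family of pairwise disjoint nonempty subsets of `Σ^Q`. -/
structure UTerm (A : Type) [Fintype A] [DecidableEq A] (n k : ℕ) where
  Q : Finset (Fin n)
  hQ : Q.card ≤ k
  J : ℕ
  T : Fin J → Finset ({ i : Fin n // i ∈ Q } → A)
  hT : ∀ j, (T j).Nonempty
  hdisj : ∀ j j', j ≠ j' → Disjoint (T j) (T j')

variable {A : Type} [Fintype A] [DecidableEq A] {n k : ℕ}

/-- The string equal to `t` on `Q` and to `z` on `Qᶜ`. -/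
def glue (Q : Finset (Fin n)) (t : { i : Fin n // i ∈ Q } → A)
    (z : { i : Fin n // i ∉ Q } → A) : Fin n → A :=
  fun i => if h : i ∈ Q then t ⟨i, h⟩ else z ⟨i, h⟩

/-- The subset state `|T_j , z⟩` of a local term. -/
noncomputable def UTerm.tvec (P : UTerm A n k) (j : Fin P.J)
    (z : { i : Fin n // i ∉ P.Q } → A) : (Fin n → A) → ℂ :=
  ((Real.sqrt (P.T j).card : ℂ))⁻¹ •
    (∑ t ∈ P.T j, Pi.single (glue P.Q t z) (1 : ℂ) : (Fin n → A) → ℂ)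

/-- The groundspace projector `P̃ = Σ_j Σ_z |T_j,z⟩⟨T_j,z|` of a uniform stoquastic local term. -/
noncomputable def UTerm.proj (P : UTerm A n k) : Matrix (Fin n → A) (Fin n → A) ℂ :=
  ∑ j : Fin P.J, ∑ z : { i : Fin n // i ∉ P.Q } → A,
    vecMulVec (P.tvec j z) (star (P.tvec j z))

/-- The uniform stoquastic local Hamiltonian `H = (1/m) Σᵢ (I - P̃ᵢ)`. -/
noncomputable def ham {m : ℕ} (terms : Fin m → UTerm A n k) :
    Matrix (Fin n → A) (Fin n → A) ℂ :=
  ((m : ℂ))⁻¹ • ∑ i, (1 - (terms i).proj)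

/-- A string is bad for `H` if its diagonal entry in some groundspace projector vanishes. -/
def Bad {m : ℕ} (terms : Fin m → UTerm A n k) (x : Fin n → A) : Prop :=
  ∃ i, (terms i).proj x x = 0

/-- `H` is `ε`-frustrated: every unit vector has energy at least `ε`. -/
def Frustrated {m : ℕ} (terms : Fin m → UTerm A n k) (ε : ℝ) : Prop :=
  ∀ ψ : (Fin n → A) → ℂ, ∑ x, ‖ψ x‖ ^ 2 = 1 →
    ε ≤ (star ψ ⬝ᵥ (ham terms).mulVec ψ).re

/-- Every qudit lies in at most `d` of the sets `Qᵢ`. -/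
def DegreeBound {m : ℕ} (terms : Fin m → UTerm A n k) (d : ℕ) : Prop :=
  ∀ q : Fin n, (Finset.univ.filter (fun i => q ∈ (terms i).Q)).card ≤ d

/-- The subset state of a finite set `S`. -/
noncomputable def subsetState {X : Type} [DecidableEq X] (S : Finset X) : X → ℂ :=
  fun x => if x ∈ S then ((Real.sqrt S.card : ℂ))⁻¹ else 0

set_option linter.unusedSectionVars false
set_option maxHeartbeats 1000000

-- ## restriction helpers
def res (Q : Finset (Fin n)) (x : Fin n → A) : { i : Fin n // i ∈ Q } → A := fun i => x i.1
def cres (Q : Finset (Fin n)) (x : Fin n → A) : { i : Fin n // i ∉ Q } → A := fun i => x i.1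

lemma glue_mem (Q : Finset (Fin n)) (t) (z) {i : Fin n} (h : i ∈ Q) :
    glue (A := A) Q t z i = t ⟨i, h⟩ := by simp [glue, h]

lemma glue_not_mem (Q : Finset (Fin n)) (t) (z) {i : Fin n} (h : i ∉ Q) :
    glue (A := A) Q t z i = z ⟨i, h⟩ := by simp [glue, h]

lemma res_glue (Q : Finset (Fin n)) (t) (z) : res Q (glue (A := A) Q t z) = t := by
  funext i; simp [res, glue, i.2]

lemma cres_glue (Q : Finset (Fin n)) (t) (z) : cres Q (glue (A := A) Q t z) = z := by
  funext i; simp [cres, glue, i.2]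

lemma glue_res_cres (Q : Finset (Fin n)) (x : Fin n → A) : glue Q (res Q x) (cres Q x) = x := by
  funext i; by_cases h : i ∈ Q <;> simp [glue, res, cres, h]

lemma glue_eq_iff {Q : Finset (Fin n)} {t} {z} {x : Fin n → A} :
    glue Q t z = x ↔ t = res Q x ∧ z = cres Q x := by
  constructor
  · rintro rfl; exact ⟨(res_glue _ _ _).symm, (cres_glue _ _ _).symm⟩
  · rintro ⟨rfl, rfl⟩; exact glue_res_cres Q x

lemma glue_injective (Q : Finset (Fin n)) (z) :
    Function.Injective (fun t => glue (A := A) Q t z) := by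
  intro t t' h
  have := congrArg (res Q) h
  simpa [res_glue] using this

-- ## subsetState basics
lemma subsetState_apply {X : Type} [DecidableEq X] (S : Finset X) (x : X) :
    subsetState S x = (((if x ∈ S then (Real.sqrt S.card)⁻¹ else 0 : ℝ)) : ℂ) := by
  simp [subsetState]; split <;> simp

lemma subsetState_re_nonneg {X : Type} [DecidableEq X] (S : Finset X) (x : X) :
    0 ≤ (if x ∈ S then (Real.sqrt S.card)⁻¹ else 0 : ℝ) := by
  split
  · positivity
  · exact le_rfl

lemma sqrt_card_ne_zero {X : Type} {S : Finset X} (hS : S.Nonempty) :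
    Real.sqrt S.card ≠ 0 := by
  have : (0:ℝ) < S.card := by exact_mod_cast Finset.card_pos.mpr hS
  positivity

lemma subsetState_ne_zero_iff {X : Type} [DecidableEq X] {S : Finset X} (hS : S.Nonempty)
    (x : X) : subsetState S x ≠ 0 ↔ x ∈ S := by
  rw [subsetState_apply]
  by_cases h : x ∈ S <;> simp [h, sqrt_card_ne_zero hS]

lemma dot_subsetState_general {X : Type} [Fintype X] [DecidableEq X] (S S' : Finset X) :
    star (subsetState S) ⬝ᵥ subsetState S'
      = (((S ∩ S').card : ℝ) * (Real.sqrt S.card)⁻¹ * (Real.sqrt S'.card)⁻¹ : ℝ) := by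
  unfold dotProduct
  have : ∀ x : X, (star (subsetState S) : X → ℂ) x * subsetState S' x
      = (((if x ∈ S ∩ S' then (Real.sqrt S.card)⁻¹ * (Real.sqrt S'.card)⁻¹ else 0 : ℝ)) : ℂ) := by
    intro x
    simp only [Pi.star_apply, subsetState_apply, Complex.star_def, Complex.conj_ofReal,
      Finset.mem_inter]
    by_cases h1 : x ∈ S <;> by_cases h2 : x ∈ S' <;> simp [h1, h2]
  rw [Finset.sum_congr rfl (fun x _ => this x)]
  rw [← Complex.ofReal_sum]
  norm_cast
  rw [Finset.sum_ite_mem, Finset.univ_inter, Finset.sum_const, nsmul_eq_mul]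
  ring

lemma dot_subsetState_self {X : Type} [Fintype X] [DecidableEq X] {S : Finset X}
    (hS : S.Nonempty) : star (subsetState S) ⬝ᵥ subsetState S = 1 := by
  rw [dot_subsetState_general, Finset.inter_self]
  have h := sqrt_card_ne_zero hS
  have : (S.card : ℝ) = Real.sqrt S.card * Real.sqrt S.card :=
    (Real.mul_self_sqrt (by positivity)).symm
  rw [this]
  rw [Real.sqrt_mul_self (Real.sqrt_nonneg _), Complex.ofReal_eq_one]
  field_simp

lemma dot_subsetState_disjoint {X : Type} [Fintype X] [DecidableEq X] {S S' : Finset X}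
    (h : Disjoint S S') : star (subsetState S) ⬝ᵥ subsetState S' = 0 := by
  rw [dot_subsetState_general]
  rw [Finset.disjoint_iff_inter_eq_empty] at h
  simp [h]

lemma sum_normsq_subsetState {X : Type} [Fintype X] [DecidableEq X] {S : Finset X}
    (hS : S.Nonempty) : ∑ x, ‖subsetState S x‖ ^ 2 = 1 := by
  have h1 : star (subsetState S) ⬝ᵥ subsetState S = 1 := dot_subsetState_self hS
  have h2 : ∀ x, (star (subsetState S) : X → ℂ) x * subsetState S x
      = ((‖subsetState S x‖ ^ 2 : ℝ) : ℂ) := by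
    intro x
    simp only [Pi.star_apply, Complex.star_def]
    rw [mul_comm, Complex.mul_conj]
    norm_cast
    simp [Complex.normSq_eq_norm_sq]
  unfold dotProduct at h1
  rw [Finset.sum_congr rfl (fun x _ => h2 x), ← Complex.ofReal_sum] at h1
  exact_mod_cast h1

-- ## tvec as subset state
noncomputable def UTerm.img (P : UTerm A n k) (j : Fin P.J)
    (z : { i : Fin n // i ∉ P.Q } → A) : Finset (Fin n → A) :=
  (P.T j).image (fun t => glue P.Q t z)

lemma UTerm.img_card (P : UTerm A n k) (j : Fin P.J) (z) :
    (P.img j z).card = (P.T j).card :=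
  Finset.card_image_of_injective _ (glue_injective P.Q z)

lemma UTerm.img_nonempty (P : UTerm A n k) (j : Fin P.J) (z) :
    (P.img j z).Nonempty := (P.hT j).image _

lemma UTerm.mem_img_iff (P : UTerm A n k) (j : Fin P.J) (z) (x : Fin n → A) :
    x ∈ P.img j z ↔ res P.Q x ∈ P.T j ∧ cres P.Q x = z := by
  unfold UTerm.img
  simp only [Finset.mem_image]
  constructor
  · rintro ⟨t, ht, rfl⟩
    simp [res_glue, cres_glue, ht]
  · rintro ⟨h1, rfl⟩
    exact ⟨res P.Q x, h1, glue_res_cres _ _⟩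

lemma UTerm.tvec_eq (P : UTerm A n k) (j : Fin P.J) (z) :
    P.tvec j z = subsetState (P.img j z) := by
  funext x
  simp only [UTerm.tvec, Pi.smul_apply, Finset.sum_apply, smul_eq_mul, subsetState,
    UTerm.img_card]
  rw [Finset.sum_congr rfl (fun t _ => Pi.single_apply (glue P.Q t z) (1:ℂ) x)]
  by_cases h : x ∈ P.img j z
  · obtain ⟨t0, ht0, rfl⟩ := Finset.mem_image.mp h
    rw [Finset.sum_eq_single t0]
    · simp [h]
    · intro t ht htne
      simp only [ite_eq_right_iff]
      intro he
      exact absurd (glue_injective P.Q z he).symm htne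
    · intro h'; exact absurd ht0 h'
  · rw [Finset.sum_eq_zero, mul_zero]
    · simp [h]
    intro t ht
    simp only [ite_eq_right_iff]
    intro he
    exact absurd (Finset.mem_image_of_mem _ ht) (he ▸ h)

lemma UTerm.img_disjoint (P : UTerm A n k) {j j' : Fin P.J} {z z'}
    (h : (j, z) ≠ (j', z')) : Disjoint (P.img j z) (P.img j' z') := by
  rw [Finset.disjoint_left]
  intro x hx hx'
  rw [UTerm.mem_img_iff] at hx hx'
  have hz : z = z' := hx.2 ▸ hx'.2 ▸ rfl
  subst hz
  have hj : j ≠ j' := by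
    rintro rfl; exact h rfl
  exact (Finset.disjoint_left.mp (P.hdisj j j' hj) hx.1) hx'.1

lemma UTerm.tvec_ortho (P : UTerm A n k) (j j' : Fin P.J) (z z') :
    star (P.tvec j z) ⬝ᵥ P.tvec j' z' = if (j, z) = (j', z') then 1 else 0 := by
  rw [UTerm.tvec_eq, UTerm.tvec_eq]
  split
  · rename_i h
    obtain ⟨h1, h2⟩ := Prod.mk.injEq .. ▸ h
    subst h1; subst h2
    exact dot_subsetState_self (P.img_nonempty j z)
  · rename_i h
    exact dot_subsetState_disjoint (P.img_disjoint h)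

-- ## orthonormal family projectors
lemma star_mul_self_eq (z : ℂ) : star z * z = ((‖z‖ ^ 2 : ℝ) : ℂ) := by
  rw [Complex.star_def, ← Complex.normSq_eq_conj_mul_self, Complex.normSq_eq_norm_sq]

section ortho
variable {X ι : Type} [Fintype X] [DecidableEq X] [Fintype ι] [DecidableEq ι]

lemma dotProduct_sumF (u : X → ℂ) (v : ι → X → ℂ) :
    u ⬝ᵥ (∑ a, v a) = ∑ a, u ⬝ᵥ v a := by
  unfold dotProduct
  simp only [Finset.sum_apply, Finset.mul_sum]
  exact Finset.sum_comm

lemma sumF_dotProduct (v : ι → X → ℂ) (u : X → ℂ) :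
    (∑ a, v a) ⬝ᵥ u = ∑ a, v a ⬝ᵥ u := by
  unfold dotProduct
  simp only [Finset.sum_apply, Finset.sum_mul]
  exact Finset.sum_comm

lemma mulVec_sumF (M : ι → Matrix X X ℂ) (ψ : X → ℂ) :
    (∑ a, M a).mulVec ψ = ∑ a, (M a).mulVec ψ := by
  have hent : ∀ x y, (∑ a, M a) x y = ∑ a, M a x y := fun x y => by
    simp [Matrix.sum_apply]
  funext x
  simp only [mulVec, dotProduct, hent, Finset.sum_mul, Finset.sum_apply]
  exact Finset.sum_comm

lemma vecMulVec_mulVec' (u v ψ : X → ℂ) :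
    (vecMulVec u v).mulVec ψ = (v ⬝ᵥ ψ) • u := by
  funext x
  simp only [mulVec, vecMulVec, dotProduct, Pi.smul_apply, smul_eq_mul, of_apply]
  rw [Finset.sum_mul]
  exact Finset.sum_congr rfl (by intros; ring)

lemma sum_vecMulVec_mulVec (w : ι → X → ℂ) (ψ : X → ℂ) :
    (∑ a, vecMulVec (w a) (star (w a))).mulVec ψ
      = ∑ a, (star (w a) ⬝ᵥ ψ) • w a := by
  rw [mulVec_sumF]
  exact Finset.sum_congr rfl fun a _ => vecMulVec_mulVec' _ _ _

variable {w : ι → X → ℂ}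
  (hw : ∀ a b, star (w a) ⬝ᵥ w b = if a = b then 1 else 0)

lemma star_dot_comm (u v : X → ℂ) : star u ⬝ᵥ v = star (star v ⬝ᵥ u) := by
  simp only [dotProduct, star_sum, star_mul', star_star, Pi.star_apply]
  exact Finset.sum_congr rfl (by intros; ring)

include hw in
lemma ortho_energy (ψ : X → ℂ) :
    star ψ ⬝ᵥ (∑ a, vecMulVec (w a) (star (w a))).mulVec ψ
      = ((∑ a, ‖star (w a) ⬝ᵥ ψ‖ ^ 2 : ℝ) : ℂ) := by
  rw [sum_vecMulVec_mulVec, dotProduct_sumF, Complex.ofReal_sum]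
  apply Finset.sum_congr rfl
  intro a _
  rw [dotProduct_smul, smul_eq_mul, mul_comm]
  rw [show star ψ ⬝ᵥ w a = star (star (w a) ⬝ᵥ ψ) from star_dot_comm ψ (w a)]
  exact star_mul_self_eq _

include hw in
lemma ortho_normsq (ψ : X → ℂ) :
    ∑ x, ‖(∑ a, vecMulVec (w a) (star (w a))).mulVec ψ x‖ ^ 2
      = ∑ a, ‖star (w a) ⬝ᵥ ψ‖ ^ 2 := by
  set c : ι → ℂ := fun a => star (w a) ⬝ᵥ ψ with hc
  set φ := (∑ a, vecMulVec (w a) (star (w a))).mulVec ψ with hφ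
  have hφ2 : φ = ∑ a, c a • w a := sum_vecMulVec_mulVec w ψ
  have h0 : ((∑ x, ‖φ x‖ ^ 2 : ℝ) : ℂ) = star φ ⬝ᵥ φ := by
    rw [Complex.ofReal_sum]
    unfold dotProduct
    exact Finset.sum_congr rfl fun x _ => (star_mul_self_eq (φ x)).symm
  have hsp : star φ ⬝ᵥ φ = ∑ a, star (c a) * c a := by
    rw [hφ2]
    have hst : star (∑ a, c a • w a) = ∑ a, star (c a) • star (w a) := by
      rw [star_sum]
      exact Finset.sum_congr rfl fun a _ => by rw [star_smul]
    rw [hst, sumF_dotProduct]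
    apply Finset.sum_congr rfl
    intro a _
    rw [smul_dotProduct, dotProduct_sumF]
    have hinner : ∀ b, star (w a) ⬝ᵥ c b • w b = c b * (if a = b then 1 else 0) := by
      intro b
      rw [dotProduct_smul, smul_eq_mul, hw a b]
    rw [Finset.sum_congr rfl fun b _ => hinner b]
    rw [Finset.sum_mul_boole, if_pos (Finset.mem_univ a), smul_eq_mul]
  have key : ((∑ x, ‖φ x‖ ^ 2 : ℝ) : ℂ) = ((∑ a, ‖c a‖ ^ 2 : ℝ) : ℂ) := by
    rw [h0, hsp, Complex.ofReal_sum]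
    exact Finset.sum_congr rfl fun a _ => star_mul_self_eq (c a)
  exact_mod_cast key
end ortho

-- ## nonneg complex predicate
def nnC (z : ℂ) : Prop := ∃ r : ℝ, 0 ≤ r ∧ z = r

lemma nnC_zero : nnC 0 := ⟨0, le_rfl, by simp⟩
lemma nnC_add {z w : ℂ} (hz : nnC z) (hw : nnC w) : nnC (z + w) := by
  obtain ⟨r, hr, rfl⟩ := hz; obtain ⟨s, hs, rfl⟩ := hw
  exact ⟨r + s, by positivity, by push_cast; ring⟩
lemma nnC_mul {z w : ℂ} (hz : nnC z) (hw : nnC w) : nnC (z * w) := by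
  obtain ⟨r, hr, rfl⟩ := hz; obtain ⟨s, hs, rfl⟩ := hw
  exact ⟨r * s, by positivity, by push_cast; ring⟩
lemma nnC_star {z : ℂ} (hz : nnC z) : nnC (star z) := by
  obtain ⟨r, hr, rfl⟩ := hz
  exact ⟨r, hr, by rw [Complex.star_def, Complex.conj_ofReal]⟩
lemma nnC_sum {ι : Type*} (s : Finset ι) (f : ι → ℂ) (h : ∀ i ∈ s, nnC (f i)) :
    nnC (∑ i ∈ s, f i) :=
  Finset.sum_induction f nnC (fun _ _ => nnC_add) nnC_zero h
lemma nnC_re_nonneg {z : ℂ} (hz : nnC z) : 0 ≤ z.re := by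
  obtain ⟨r, hr, rfl⟩ := hz; simpa using hr
lemma nnC_im {z : ℂ} (hz : nnC z) : z.im = 0 := by
  obtain ⟨r, hr, rfl⟩ := hz; simp
lemma nnC_re_pos {z : ℂ} (hz : nnC z) (h0 : z ≠ 0) : 0 < z.re := by
  obtain ⟨r, hr, rfl⟩ := hz
  have : r ≠ 0 := fun h => h0 (by simp [h])
  simpa using lt_of_le_of_ne hr (Ne.symm this)
lemma nnC_sum_ne_zero {ι : Type*} {s : Finset ι} {f : ι → ℂ}
    (h : ∀ i ∈ s, nnC (f i)) {i0 : ι} (hi0 : i0 ∈ s) (hne : f i0 ≠ 0) :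
    (∑ i ∈ s, f i) ≠ 0 := by
  have hre : 0 < (∑ i ∈ s, f i).re := by
    rw [Complex.re_sum]
    exact Finset.sum_pos' (fun i hi => nnC_re_nonneg (h i hi))
      ⟨i0, hi0, nnC_re_pos (h i0 hi0) hne⟩
  intro hc
  rw [hc] at hre
  simp at hre

lemma nnC_subsetState {X : Type} [DecidableEq X] (S : Finset X) (x : X) :
    nnC (subsetState S x) :=
  ⟨_, subsetState_re_nonneg S x, subsetState_apply S x⟩

def NNvec {X : Type} (v : X → ℂ) : Prop := ∀ x, nnC (v x)

lemma NNvec_subsetState {X : Type} [DecidableEq X] (S : Finset X) :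
    NNvec (subsetState S) := fun x => nnC_subsetState S x

-- ## proj entries
variable (P : UTerm A n k)

lemma UTerm.proj_apply (x y : Fin n → A) :
    P.proj x y = ∑ j : Fin P.J, ∑ z, P.tvec j z x * star (P.tvec j z y) := by
  unfold UTerm.proj
  simp [Matrix.sum_apply, vecMulVec, Pi.star_apply]

lemma UTerm.tvec_nnC (j : Fin P.J) (z) (x) : nnC (P.tvec j z x) := by
  rw [UTerm.tvec_eq]
  exact nnC_subsetState _ _

lemma UTerm.proj_entry_nnC (x y : Fin n → A) : nnC (P.proj x y) := by
  rw [UTerm.proj_apply]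
  refine nnC_sum _ _ fun j _ => nnC_sum _ _ fun z _ => ?_
  exact nnC_mul (P.tvec_nnC j z x) (nnC_star (P.tvec_nnC j z y))

lemma UTerm.tvec_ne_zero_iff (j : Fin P.J) (z) (x) :
    P.tvec j z x ≠ 0 ↔ (res P.Q x ∈ P.T j ∧ cres P.Q x = z) := by
  rw [UTerm.tvec_eq, subsetState_ne_zero_iff (P.img_nonempty j z), UTerm.mem_img_iff]

lemma UTerm.proj_diag_ne_zero_iff (x : Fin n → A) :
    P.proj x x ≠ 0 ↔ ∃ j, res P.Q x ∈ P.T j := by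
  constructor
  · intro h
    rw [UTerm.proj_apply] at h
    obtain ⟨j, -, hj⟩ := Finset.exists_ne_zero_of_sum_ne_zero h
    obtain ⟨z, -, hz⟩ := Finset.exists_ne_zero_of_sum_ne_zero hj
    have h1 : P.tvec j z x ≠ 0 := fun h0 => hz (by rw [h0, zero_mul])
    exact ⟨j, ((P.tvec_ne_zero_iff j z x).mp h1).1⟩
  · rintro ⟨j, hj⟩
    rw [UTerm.proj_apply]
    have h1 : P.tvec j (cres P.Q x) x ≠ 0 :=
      (P.tvec_ne_zero_iff j (cres P.Q x) x).mpr ⟨hj, rfl⟩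
    have hterm : (∑ z, P.tvec j z x * star (P.tvec j z x)) ≠ 0 := by
      apply nnC_sum_ne_zero
        (fun z _ => nnC_mul (P.tvec_nnC j z x) (nnC_star (P.tvec_nnC j z x)))
        (Finset.mem_univ (cres P.Q x))
      exact mul_ne_zero h1 (star_ne_zero.mpr h1)
    apply nnC_sum_ne_zero
      (fun j' _ => nnC_sum _ _
        (fun z _ => nnC_mul (P.tvec_nnC j' z x) (nnC_star (P.tvec_nnC j' z x))))
      (Finset.mem_univ j) hterm

lemma UTerm.proj_ne_zero_agree {x y : Fin n → A} (h : P.proj x y ≠ 0) :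
    (∀ q : Fin n, q ∉ P.Q → x q = y q) ∧ P.proj x x ≠ 0 := by
  rw [UTerm.proj_apply] at h
  obtain ⟨j, -, hj⟩ := Finset.exists_ne_zero_of_sum_ne_zero h
  obtain ⟨z, -, hz⟩ := Finset.exists_ne_zero_of_sum_ne_zero hj
  have h1 : P.tvec j z x ≠ 0 := fun h0 => hz (by rw [h0, zero_mul])
  have h2 : P.tvec j z y ≠ 0 := fun h0 => hz (by rw [h0, star_zero, mul_zero])
  rw [UTerm.tvec_ne_zero_iff] at h1 h2
  constructor
  · intro q hq
    have := h1.2 ▸ h2.2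
    have heq : cres P.Q x = cres P.Q y := by rw [h1.2, h2.2]
    exact congrFun heq ⟨q, hq⟩
  · exact (P.proj_diag_ne_zero_iff x).mpr ⟨j, h1.1⟩

-- ## proj on nonneg vectors
lemma UTerm.mulVec_apply (M : Matrix (Fin n → A) (Fin n → A) ℂ) (v : (Fin n → A) → ℂ) (x) :
    M.mulVec v x = ∑ y, M x y * v y := rfl

lemma UTerm.proj_mulVec_NN {v : (Fin n → A) → ℂ} (hv : NNvec v) :
    NNvec (P.proj.mulVec v) := by
  intro x
  rw [UTerm.mulVec_apply]
  exact nnC_sum _ _ fun y _ => nnC_mul (P.proj_entry_nnC x y) (hv y)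

lemma UTerm.proj_mulVec_ne_zero {v : (Fin n → A) → ℂ} (hv : NNvec v) {y0 : Fin n → A}
    (hv0 : v y0 ≠ 0) (hd : P.proj y0 y0 ≠ 0) : P.proj.mulVec v y0 ≠ 0 := by
  rw [UTerm.mulVec_apply]
  exact nnC_sum_ne_zero (fun y _ => nnC_mul (P.proj_entry_nnC y0 y) (hv y))
    (Finset.mem_univ y0) (mul_ne_zero hd hv0)

lemma UTerm.proj_mulVec_support {v : (Fin n → A) → ℂ} {x : Fin n → A}
    (h : P.proj.mulVec v x ≠ 0) : ∃ y, v y ≠ 0 ∧ P.proj x y ≠ 0 := by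
  rw [UTerm.mulVec_apply] at h
  obtain ⟨y, -, hy⟩ := Finset.exists_ne_zero_of_sum_ne_zero h
  exact ⟨y, fun h0 => hy (by rw [h0, mul_zero]), fun h0 => hy (by rw [h0, zero_mul])⟩

-- ## proj energy identities
noncomputable def UTerm.wfam (P : UTerm A n k) :
    (Fin P.J × ({ i : Fin n // i ∉ P.Q } → A)) → (Fin n → A) → ℂ :=
  fun a => P.tvec a.1 a.2

lemma UTerm.proj_eq_wfam :
    P.proj = ∑ a : Fin P.J × ({ i : Fin n // i ∉ P.Q } → A),
      vecMulVec (P.wfam a) (star (P.wfam a)) := by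
  rw [UTerm.proj, Fintype.sum_prod_type]
  rfl

lemma UTerm.wfam_ortho (a b) :
    star (P.wfam a) ⬝ᵥ P.wfam b = if a = b then 1 else 0 := by
  rw [show P.wfam a = P.tvec a.1 a.2 from rfl, show P.wfam b = P.tvec b.1 b.2 from rfl,
    P.tvec_ortho]

lemma UTerm.proj_normsq_eq_energy (ψ : (Fin n → A) → ℂ) :
    ((∑ x, ‖P.proj.mulVec ψ x‖ ^ 2 : ℝ) : ℂ) = star ψ ⬝ᵥ P.proj.mulVec ψ := by
  rw [UTerm.proj_eq_wfam]
  rw [ortho_normsq P.wfam_ortho ψ, ortho_energy P.wfam_ortho ψ]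

lemma UTerm.proj_energy_re (ψ : (Fin n → A) → ℂ) :
    ∑ x, ‖P.proj.mulVec ψ x‖ ^ 2 = (star ψ ⬝ᵥ P.proj.mulVec ψ).re := by
  have := P.proj_normsq_eq_energy ψ
  rw [← this, Complex.ofReal_re]

lemma UTerm.proj_energy_nonneg (ψ : (Fin n → A) → ℂ) :
    0 ≤ (star ψ ⬝ᵥ P.proj.mulVec ψ).re := by
  rw [← UTerm.proj_energy_re]
  positivity

-- ## energy of ham
lemma star_dot_self (ψ : (Fin n → A) → ℂ) (hψ : ∑ x, ‖ψ x‖ ^ 2 = 1) :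
    star ψ ⬝ᵥ ψ = 1 := by
  unfold dotProduct
  have : ∀ x, (star ψ : (Fin n → A) → ℂ) x * ψ x = ((‖ψ x‖ ^ 2 : ℝ) : ℂ) := fun x =>
    star_mul_self_eq (ψ x)
  rw [Finset.sum_congr rfl fun x _ => this x, ← Complex.ofReal_sum, hψ]
  simp

lemma ham_energy_re {m : ℕ} (terms : Fin m → UTerm A n k) (ψ : (Fin n → A) → ℂ)
    (hψ : ∑ x, ‖ψ x‖ ^ 2 = 1) :
    (star ψ ⬝ᵥ (ham terms).mulVec ψ).re
      = (m : ℝ)⁻¹ * ∑ i, (1 - (star ψ ⬝ᵥ (terms i).proj.mulVec ψ).re) := by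
  unfold ham
  rw [Matrix.smul_mulVec, dotProduct_smul, mulVec_sumF]
  rw [dotProduct_sumF]
  have hterm : ∀ i, star ψ ⬝ᵥ ((1 : Matrix _ _ ℂ) - (terms i).proj).mulVec ψ
      = ((1 - (star ψ ⬝ᵥ (terms i).proj.mulVec ψ).re : ℝ) : ℂ) := by
    intro i
    rw [Matrix.sub_mulVec, dotProduct_sub, Matrix.one_mulVec, star_dot_self ψ hψ,
      ← (terms i).proj_normsq_eq_energy ψ, Complex.ofReal_re]
    push_cast
    ring
  rw [Finset.sum_congr rfl fun i _ => hterm i, ← Complex.ofReal_sum]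
  rw [show ((m : ℂ))⁻¹ = ((((m:ℝ))⁻¹ : ℝ) : ℂ) by push_cast; ring]
  rw [smul_eq_mul, ← Complex.ofReal_mul, Complex.ofReal_re]

-- ## Markov counting
lemma markov_count {m : ℕ} {ε : ℝ} (hε0 : 0 < ε) (hε1 : ε ≤ 1) (e : Fin m → ℝ)
    (he0 : ∀ i, 0 ≤ e i)
    (h : ε ≤ (m : ℝ)⁻¹ * ∑ i, (1 - e i)) :
    ε * m / 2 ≤ ((Finset.univ.filter (fun i => e i ≤ 1 - ε / 2)).card : ℝ) := by
  classical
  by_cases hm : m = 0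
  · subst hm; simp
  have hmpos : (0:ℝ) < m := by exact_mod_cast Nat.pos_of_ne_zero hm
  set Bc := Finset.univ.filter (fun i => e i ≤ 1 - ε / 2) with hBc
  set B := Finset.univ.filter (fun i => ¬ (e i ≤ 1 - ε / 2)) with hB
  have hcards : Bc.card + B.card = m := by
    rw [hBc, hB]
    rw [Finset.card_filter_add_card_filter_not]
    simp
  have hsum_le : ∑ i, e i ≤ m * (1 - ε) := by
    have h2 : ε * m ≤ ∑ i, (1 - e i) := by
      rw [inv_mul_eq_div, le_div_iff₀ hmpos] at h
      linarith
    have h3 : ∑ i, (1 - e i) = m - ∑ i, e i := by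
      rw [Finset.sum_sub_distrib]
      simp [Finset.card_univ]
    nlinarith
  have hB_le : (B.card : ℝ) * (1 - ε / 2) ≤ ∑ i, e i := by
    have h1 : ∑ i ∈ B, e i ≤ ∑ i, e i :=
      Finset.sum_le_sum_of_subset_of_nonneg (Finset.subset_univ B)
        (fun i _ _ => he0 i)
    have h2 : (B.card : ℝ) * (1 - ε / 2) ≤ ∑ i ∈ B, e i := by
      have h3 : ∀ i ∈ B, (1 - ε / 2) ≤ e i := by
        intro i hi
        rw [hB, Finset.mem_filter] at hi
        linarith [lt_of_not_ge hi.2]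
      have := Finset.card_nsmul_le_sum B e (1 - ε / 2) h3
      simpa [nsmul_eq_mul] using this
    linarith
  have hBcard : (B.card : ℝ) ≤ m * (1 - ε / 2) := by
    have hpos : (0:ℝ) < 1 - ε / 2 := by linarith
    have hle : (B.card : ℝ) * (1 - ε / 2) ≤ m * (1 - ε) := le_trans hB_le hsum_le
    have key : (B.card : ℝ) * (1 - ε / 2) ≤ (m * (1 - ε / 2)) * (1 - ε / 2) := by
      nlinarith [mul_nonneg hmpos.le (sq_nonneg ε)]
    exact le_of_mul_le_mul_right key hpos
  have : (Bc.card : ℝ) = m - B.card := by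
    have := hcards
    push_cast [← this]
    ring
  rw [this]
  nlinarith

-- ## degree counting
lemma card_not_disjoint {m : ℕ} (terms : Fin m → UTerm A n k) {d : ℕ}
    (hdeg : DegreeBound terms d) (Q0 : Finset (Fin n)) (hQ0 : Q0.card ≤ k) :
    ((Finset.univ.filter (fun i => ¬ Disjoint (terms i).Q Q0)).card) ≤ k * d := by
  classical
  have hsub : Finset.univ.filter (fun i => ¬ Disjoint (terms i).Q Q0)
      ⊆ Q0.biUnion (fun q => Finset.univ.filter (fun i => q ∈ (terms i).Q)) := by
    intro i hi
    rw [Finset.mem_filter] at hi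
    rw [Finset.not_disjoint_iff] at hi
    obtain ⟨q, hq1, hq2⟩ := hi.2
    exact Finset.mem_biUnion.mpr ⟨q, hq2, Finset.mem_filter.mpr ⟨Finset.mem_univ _, hq1⟩⟩
  calc (Finset.univ.filter (fun i => ¬ Disjoint (terms i).Q Q0)).card
      ≤ (Q0.biUnion (fun q => Finset.univ.filter (fun i => q ∈ (terms i).Q))).card :=
        Finset.card_le_card hsub
    _ ≤ ∑ q ∈ Q0, (Finset.univ.filter (fun i => q ∈ (terms i).Q)).card :=
        Finset.card_biUnion_le
    _ ≤ ∑ _q ∈ Q0, d := Finset.sum_le_sum fun q _ => hdeg q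
    _ = Q0.card * d := by rw [Finset.sum_const, smul_eq_mul]
    _ ≤ k * d := Nat.mul_le_mul_right d hQ0

-- ## support finsets
open scoped Classical in
noncomputable def suppF (v : (Fin n → A) → ℂ) : Finset (Fin n → A) :=
  Finset.univ.filter (fun x => v x ≠ 0)

lemma mem_suppF {v : (Fin n → A) → ℂ} {x : Fin n → A} : x ∈ suppF v ↔ v x ≠ 0 := by
  classical
  simp [suppF]

lemma suppF_nonempty {v : (Fin n → A) → ℂ} (hv : v ≠ 0) : (suppF v).Nonempty := by
  obtain ⟨x, hx⟩ := Function.ne_iff.mp hv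
  exact ⟨x, mem_suppF.mpr hx⟩

lemma subsetState_ne_zero_mem {X : Type} [DecidableEq X] {S : Finset X} {x : X}
    (h : subsetState S x ≠ 0) : x ∈ S := by
  by_contra hx
  exact h (by simp [subsetState, hx])

-- ## the iterated vectors
variable {m : ℕ}

noncomputable def Uv (terms : Fin m → UTerm A n k) (S₀ : Finset (Fin n → A))
    (f : ℕ → Fin m) : ℕ → ((Fin n → A) → ℂ)
  | 0 => subsetState S₀
  | t + 1 => (terms (f t)).proj.mulVec (Uv terms S₀ f t)

variable {terms : Fin m → UTerm A n k} {S₀ : Finset (Fin n → A)}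

lemma Uv_congr {f g : ℕ → Fin m} : ∀ {t : ℕ}, (∀ s < t, f s = g s) →
    Uv terms S₀ f t = Uv terms S₀ g t
  | 0, _ => rfl
  | t + 1, h => by
    rw [Uv, Uv, Uv_congr (fun s hs => h s (Nat.lt_succ_of_lt hs)),
      h t (Nat.lt_succ_self t)]

lemma Uv_NN (f : ℕ → Fin m) : ∀ t, NNvec (Uv terms S₀ f t)
  | 0 => NNvec_subsetState S₀
  | t + 1 => (terms (f t)).proj_mulVec_NN (Uv_NN f t)

lemma Uv_support (f : ℕ → Fin m) : ∀ t (x : Fin n → A), Uv terms S₀ f t x ≠ 0 →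
    ∃ x₀ ∈ S₀, ∀ q : Fin n, (∀ s < t, q ∉ (terms (f s)).Q) → x q = x₀ q
  | 0, x, hx => ⟨x, subsetState_ne_zero_mem hx, fun q _ => rfl⟩
  | t + 1, x, hx => by
    rw [Uv] at hx
    obtain ⟨y, hy, hxy⟩ := (terms (f t)).proj_mulVec_support hx
    obtain ⟨x₀, hx₀, hyx₀⟩ := Uv_support f t y hy
    refine ⟨x₀, hx₀, fun q hq => ?_⟩
    have h1 : x q = y q :=
      ((terms (f t)).proj_ne_zero_agree hxy).1 q (hq t (Nat.lt_succ_self t))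
    rw [h1]
    exact hyx₀ q (fun s hs => hq s (Nat.lt_succ_of_lt hs))

lemma Uv_good_diag (hgood : ∀ x ∈ S₀, ¬ Bad terms x) (f : ℕ → Fin m) (t : ℕ)
    {i : Fin m} (hdisj : ∀ s < t, Disjoint (terms i).Q (terms (f s)).Q)
    {x : Fin n → A} (hx : Uv terms S₀ f t x ≠ 0) :
    (terms i).proj x x ≠ 0 := by
  obtain ⟨x₀, hx₀, hagree⟩ := Uv_support f t x hx
  have h0 : (terms i).proj x₀ x₀ ≠ 0 := by
    intro hc
    exact hgood x₀ hx₀ ⟨i, hc⟩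
  rw [UTerm.proj_diag_ne_zero_iff] at h0 ⊢
  have hres : res (terms i).Q x = res (terms i).Q x₀ := by
    funext q
    exact hagree q.1 (fun s hs => Finset.disjoint_left.mp (hdisj s hs) q.2)
  rw [hres]
  exact h0

lemma Uv_ne_zero_succ (hgood : ∀ x ∈ S₀, ¬ Bad terms x) (f : ℕ → Fin m) (t : ℕ)
    (hdisj : ∀ s < t, Disjoint (terms (f t)).Q (terms (f s)).Q)
    (hne : Uv terms S₀ f t ≠ 0) : Uv terms S₀ f (t + 1) ≠ 0 := by
  obtain ⟨x, hx⟩ := Function.ne_iff.mp hne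
  have hdiag := Uv_good_diag hgood f t hdisj hx
  have := (terms (f t)).proj_mulVec_ne_zero (Uv_NN f t) hx hdiag
  rw [Uv]
  intro hc
  rw [hc] at this
  exact this rfl

-- ## the invariant
def SInv (terms : Fin m → UTerm A n k) (S₀ : Finset (Fin n → A)) (ε : ℝ)
    (f : ℕ → Fin m) (t : ℕ) : Prop :=
  (∀ s s', s < t → s' < t → s ≠ s' → Disjoint (terms (f s)).Q (terms (f s')).Q) ∧
  (∀ s, s ≤ t → Uv terms S₀ f s ≠ 0) ∧
  (∀ s, s < t →
    ∑ x, ‖(terms (f s)).proj.mulVec (subsetState (suppF (Uv terms S₀ f s))) x‖ ^ 2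
      ≤ 1 - ε / 2)

lemma subsetState_ne_zero' {X : Type} [Fintype X] [DecidableEq X] {S : Finset X}
    (hS : S.Nonempty) : subsetState S ≠ (0 : X → ℂ) := by
  obtain ⟨x, hx⟩ := hS
  intro hc
  have : subsetState S x ≠ 0 := (subsetState_ne_zero_iff ⟨x, hx⟩ x).mpr hx
  rw [hc] at this
  exact this rfl

lemma sinv_zero (hS₀ne : S₀.Nonempty) (ε : ℝ) (f : ℕ → Fin m) :
    SInv terms S₀ ε f 0 := by
  refine ⟨fun s s' hs => absurd hs (Nat.not_lt_zero s), fun s hs => ?_,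
    fun s hs => absurd hs (Nat.not_lt_zero s)⟩
  rw [Nat.le_zero] at hs
  subst hs
  exact subsetState_ne_zero' hS₀ne

lemma sinv_step {d : ℕ} {ε : ℝ} (hε0 : 0 < ε) (hε1 : ε ≤ 1)
    (hdeg : DegreeBound terms d) (hfrust : Frustrated terms ε)
    (hgood : ∀ x ∈ S₀, ¬ Bad terms x)
    (f : ℕ → Fin m) (t : ℕ) (ht : (t : ℝ) * ((k : ℝ) * (d : ℝ)) < ε * m / 2)
    (hInv : SInv terms S₀ ε f t) : ∃ g, SInv terms S₀ ε g (t + 1) := by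
  classical
  obtain ⟨hdisjI, hneI, hbdI⟩ := hInv
  set v := Uv terms S₀ f t with hv
  have hvne : v ≠ 0 := hneI t le_rfl
  set s0 := subsetState (suppF v) with hs0
  have hunit : ∑ x, ‖s0 x‖ ^ 2 = 1 := sum_normsq_subsetState (suppF_nonempty hvne)
  have hfr := hfrust s0 hunit
  rw [ham_energy_re terms s0 hunit] at hfr
  set e : Fin m → ℝ := fun i => (star s0 ⬝ᵥ (terms i).proj.mulVec s0).re with he
  have hE := markov_count hε0 hε1 e (fun i => (terms i).proj_energy_nonneg s0) hfr
  set E := Finset.univ.filter (fun i => e i ≤ 1 - ε / 2) with hEdef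
  set D := Finset.univ.filter
    (fun i => ∃ s, s < t ∧ ¬ Disjoint (terms i).Q (terms (f s)).Q) with hDdef
  have hDcard : D.card ≤ t * (k * d) := by
    have hsub : D ⊆ (Finset.range t).biUnion
        (fun s => Finset.univ.filter (fun i => ¬ Disjoint (terms i).Q (terms (f s)).Q)) := by
      intro i hi
      rw [hDdef, Finset.mem_filter] at hi
      obtain ⟨-, s, hs, hns⟩ := hi
      exact Finset.mem_biUnion.mpr ⟨s, Finset.mem_range.mpr hs,
        Finset.mem_filter.mpr ⟨Finset.mem_univ _, hns⟩⟩
    calc D.card ≤ _ := Finset.card_le_card hsub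
      _ ≤ ∑ s ∈ Finset.range t,
          (Finset.univ.filter (fun i => ¬ Disjoint (terms i).Q (terms (f s)).Q)).card :=
        Finset.card_biUnion_le
      _ ≤ ∑ _s ∈ Finset.range t, k * d := Finset.sum_le_sum fun s _ =>
          card_not_disjoint terms hdeg (terms (f s)).Q (terms (f s)).hQ
      _ = t * (k * d) := by rw [Finset.sum_const, Finset.card_range, smul_eq_mul]
  have hlt : (D.card : ℝ) < (E.card : ℝ) := by
    apply lt_of_le_of_lt (b := (t : ℝ) * ((k : ℝ) * (d : ℝ)))
    · calc (D.card : ℝ) ≤ ((t * (k * d) : ℕ) : ℝ) := by exact_mod_cast hDcard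
        _ = (t : ℝ) * ((k : ℝ) * (d : ℝ)) := by push_cast; ring
    · exact lt_of_lt_of_le ht hE
  have hnsub : ¬ E ⊆ D := by
    intro hsub
    have := Finset.card_le_card hsub
    have : (E.card : ℝ) ≤ (D.card : ℝ) := by exact_mod_cast this
    linarith
  obtain ⟨i, hiE, hiD⟩ := Finset.not_subset.mp hnsub
  set g : ℕ → Fin m := fun s => if s < t then f s else i with hg
  have hgf : ∀ s, s < t → g s = f s := fun s hs => by simp [hg, hs]
  have hgt : g t = i := by simp [hg]
  have hUc : ∀ s, s ≤ t → Uv terms S₀ g s = Uv terms S₀ f s := by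
    intro s hs
    exact (Uv_congr (fun s' hs' => (hgf s' (lt_of_lt_of_le hs' hs)).symm)).symm
  have hidisj : ∀ s, s < t → Disjoint (terms i).Q (terms (f s)).Q := by
    intro s hs
    by_contra hc
    exact hiD (Finset.mem_filter.mpr ⟨Finset.mem_univ _, s, hs, hc⟩)
  have hiEbd : e i ≤ 1 - ε / 2 := (Finset.mem_filter.mp hiE).2
  refine ⟨g, ?_, ?_, ?_⟩
  · intro s s' hs hs' hne
    rcases Nat.lt_succ_iff_lt_or_eq.mp hs with hs | hs <;>
      rcases Nat.lt_succ_iff_lt_or_eq.mp hs' with hs' | hs'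
    · rw [hgf s hs, hgf s' hs']
      exact hdisjI s s' hs hs' hne
    · subst hs'
      rw [hgf s hs, hgt]
      exact (hidisj s hs).symm
    · subst hs
      rw [hgf s' hs', hgt]
      exact hidisj s' hs'
    · subst hs; subst hs'; exact absurd rfl hne
  · intro s hs
    rcases Nat.lt_succ_iff_lt_or_eq.mp (Nat.lt_succ_of_le hs) with hs' | hs'
    · have hst : s ≤ t := Nat.lt_succ_iff.mp hs'
      rw [hUc s hst]
      exact hneI s hst
    · subst hs'
      apply Uv_ne_zero_succ hgood g t
      · intro s' hs'
        rw [hgt, hgf s' hs']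
        exact hidisj s' hs'
      · rw [hUc t le_rfl]
        exact hvne
  · intro s hs
    rcases Nat.lt_succ_iff_lt_or_eq.mp hs with hs' | hs'
    · rw [hgf s hs', hUc s (le_of_lt hs')]
      exact hbdI s hs'
    · subst hs'
      rw [hgt, hUc s le_rfl, ← hv, ← hs0]
      rw [(terms i).proj_energy_re s0]
      exact hiEbd


/-- If an `ε`-frustrated uniform stoquastic `k`-local Hamiltonian with degree bound `d` and
`m ≥ n` is given, and `S₀` is a nonempty set of good strings, then there is a sequence of at
least `εm/(2kd) ≥ εn/(2kd)` terms with pairwise disjoint qudit sets which is sequentially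
`ε/2`-frustrated by the subset state `|S₀⟩`. -/
theorem stmt8 {A : Type} [Fintype A] [DecidableEq A] (hA : 2 ≤ Fintype.card A)
    {n k d m : ℕ} (hn : 1 ≤ n) (hk : 1 ≤ k) (hd : 1 ≤ d) (hm : 1 ≤ m) (hmn : n ≤ m)
    (terms : Fin m → UTerm A n k)
    (hdeg : DegreeBound terms d)
    (ε : ℝ) (hε0 : 0 < ε) (hε1 : ε ≤ 1)
    (hfrust : Frustrated terms ε)
    (S₀ : Finset (Fin n → A)) (hS₀ne : S₀.Nonempty)
    (hgood : ∀ x ∈ S₀, ¬ Bad terms x) :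
    ∃ (ℓ : ℕ) (idx : Fin ℓ → Fin m) (u : Fin (ℓ + 1) → (Fin n → A) → ℂ),
      ε * m / (2 * k * d) ≤ (ℓ : ℝ) ∧
      ε * n / (2 * k * d) ≤ (ℓ : ℝ) ∧
      (∀ t t' : Fin ℓ, t ≠ t' → Disjoint (terms (idx t)).Q (terms (idx t')).Q) ∧
      u 0 = subsetState S₀ ∧
      (∀ t : Fin ℓ, u t.succ = (terms (idx t)).proj.mulVec (u t.castSucc)) ∧
      (∀ t : Fin ℓ, u t.castSucc ≠ 0 ∧
        ∀ St : Finset (Fin n → A), ↑St = {x | u t.castSucc x ≠ 0} →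
          ∑ x, ‖(terms (idx t)).proj.mulVec (subsetState St) x‖ ^ 2 ≤ 1 - ε / 2) := by
  classical
  set ℓ := ⌈ε * m / (2 * k * d)⌉₊ with hℓdef
  have hkd : (0:ℝ) < (k:ℝ) * d := by
    have hk' : (0:ℝ) < k := by exact_mod_cast hk
    have hd' : (0:ℝ) < d := by exact_mod_cast hd
    positivity
  have hex : ∀ t, t ≤ ℓ → ∃ f : ℕ → Fin m, SInv terms S₀ ε f t := by
    intro t
    induction t with
    | zero => exact fun _ => ⟨fun _ => ⟨0, hm⟩, sinv_zero hS₀ne ε _⟩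
    | succ t ih =>
      intro hle
      obtain ⟨f, hf⟩ := ih (Nat.le_of_succ_le hle)
      have htlt : t < ℓ := Nat.lt_of_succ_le hle
      have htr : (t:ℝ) < ε * m / (2 * k * d) := Nat.lt_ceil.mp htlt
      have heq : ε * m / (2 * (k:ℝ) * d) = (ε * m / 2) / ((k:ℝ) * d) := by ring
      have ht : (t : ℝ) * ((k : ℝ) * (d : ℝ)) < ε * m / 2 := by
        rw [heq] at htr
        exact (lt_div_iff₀ hkd).mp htr
      exact sinv_step hε0 hε1 hdeg hfrust hgood f t ht hf
  obtain ⟨f, hf⟩ := hex ℓ le_rfl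
  obtain ⟨hdisj', hne', hbd'⟩ := hf
  refine ⟨ℓ, fun t => f t.1, fun t => Uv terms S₀ f t.1, Nat.le_ceil _, ?_, ?_, ?_, ?_, ?_⟩
  · have h1 : ε * n / (2 * (k:ℝ) * d) ≤ ε * m / (2 * (k:ℝ) * d) := by
      gcongr
    exact le_trans h1 (Nat.le_ceil _)
  · intro t t' htne
    exact hdisj' t.1 t'.1 t.2 t'.2 (fun h => htne (Fin.ext h))
  · rfl
  · intro t
    show Uv terms S₀ f (t.succ.val) = _
    rw [Fin.val_succ]
    rfl
  · intro t
    constructor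
    · exact hne' t.1 (le_of_lt t.2)
    · intro St hSt
      have hSt2 : St = suppF (Uv terms S₀ f t.1) := by
        apply Finset.coe_injective
        rw [hSt]
        ext x
        simp [mem_suppF]
      rw [hSt2]
      exact hbd' t.1 t.2
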